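/- Suppose the Reed–Solomon code RS_{n,k}(α₁,…,α_n) over F_q is NOT robust against the (n−2k+1)-permutation-insdel adversary. Then there exist distinct polynomials f = Σ f_i x^i and g = Σ g_i x^i of degree < k over F_q and distinct-element sequences I, J ∈ [n]^{2k−1} such that f(α_{I_s}) = g(α_{J_s}) for all s ∈ [2k−1]; consequently the nonzero vector (f₀ − g₀, f₁, …, f_{k−1}, −g₁, …, −g_{k−1}) lies in the right kernel of V_{I,J}(α) and is not of the form (0, h₁, …, h_{k−1}, −h₁, …, −h_{k−1}). -/

import Mathlib

/-- The `(2k-1) × (2k-1)` matrix `V_{I,J}(α)`. -/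
def Vmat {R : Type*} [CommRing R] (k n : ℕ) (x : Fin n → R)
    (I J : Fin (2 * k - 1) → Fin n) :
    Matrix (Fin (2 * k - 1)) (Fin (2 * k - 1)) R :=
  Matrix.of fun s c =>
    if (c : ℕ) = 0 then 1
    else if (c : ℕ) < k then x (I s) ^ (c : ℕ)
    else x (J s) ^ ((c : ℕ) - k + 1)

/-- The vector `(f₀, f₁, …, f_{k-1}, -g₁, …, -g_{k-1}) ∈ F^{2k-1}`. -/
def buildVec {F : Type*} [Field F] (k : ℕ) (f g : Fin k → F) (j : Fin (2 * k - 1)) : F :=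
  if h : (j : ℕ) < k then f ⟨j, h⟩
  else -g ⟨(j : ℕ) - k + 1, by have := j.isLt; omega⟩

/-- Robustness of `RS_{n,k}(α)` against the `(n-2k+1)`-permutation-insdel adversary,
via the equivalent characterization. -/
def RSRobust {F : Type*} [Field F] (n k : ℕ) (α : Fin n → F) : Prop :=
  ∀ f g : Polynomial F, f.degree < k → g.degree < k → f ≠ g →
    ∀ I J : Fin (2 * k - 1) → Fin n, Function.Injective I → Function.Injective J →
      (fun s => f.eval (α (I s))) ≠ (fun s => g.eval (α (J s)))

lemma buildVec_apply {F : Type*} [Field F] {k : ℕ} (f g : Fin k → F) (j : ℕ)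
    (hj : j < 2 * k - 1) :
    buildVec k f g ⟨j, hj⟩ =
      if h : j < k then f ⟨j, h⟩ else -g ⟨j - k + 1, by omega⟩ := rfl

/-- If `RS_{n,k}(α)` is not robust against the `(n-2k+1)`-permutation-insdel adversary,
then there are distinct polynomials `f ≠ g` of degree `< k` and distinct-element sequences
`I, J` with `f(α_{I_s}) = g(α_{J_s})` for all `s`; consequently the nonzero vector
`(f₀ - g₀, f₁, …, f_{k-1}, -g₁, …, -g_{k-1})` lies in the right kernel of `V_{I,J}(α)`
and is not of the form `(0, h₁, …, h_{k-1}, -h₁, …, -h_{k-1})`. -/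
theorem stmt11 {F : Type*} [Field F] (n k : ℕ) (hk : 0 < k) (hkn : 2 * k - 1 ≤ n)
    (α : Fin n → F) (hα : Function.Injective α)
    (hnrob : ¬ RSRobust n k α) :
    ∃ f g : Polynomial F, f.degree < k ∧ g.degree < k ∧ f ≠ g ∧
      ∃ I J : Fin (2 * k - 1) → Fin n,
        Function.Injective I ∧ Function.Injective J ∧
        (∀ s, f.eval (α (I s)) = g.eval (α (J s))) ∧
        ∃ w : Fin (2 * k - 1) → F,
          w = buildVec k (fun i => if (i : ℕ) = 0 then f.coeff 0 - g.coeff 0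
                                    else f.coeff i)
                         (fun i => if (i : ℕ) = 0 then 0 else g.coeff i) ∧
          w ≠ 0 ∧
          (Vmat k n α I J).mulVec w = 0 ∧
          ¬ ∃ h : Fin k → F, h ⟨0, hk⟩ = 0 ∧ w = buildVec k h h := by
  rw [RSRobust] at hnrob
  push_neg at hnrob
  obtain ⟨f, g, hf, hg, hfg, I, J, hI, hJ, heq⟩ := hnrob
  have heval : ∀ s, f.eval (α (I s)) = g.eval (α (J s)) := fun s => congrFun heq s
  have hfc : ∀ i, k ≤ i → f.coeff i = 0 := fun i hi =>
    Polynomial.coeff_eq_zero_of_degree_lt (lt_of_lt_of_le hf (by exact_mod_cast hi))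
  have hgc : ∀ i, k ≤ i → g.coeff i = 0 := fun i hi =>
    Polynomial.coeff_eq_zero_of_degree_lt (lt_of_lt_of_le hg (by exact_mod_cast hi))
  have hfnd : f.natDegree < k := by
    rcases eq_or_ne f 0 with rfl | h
    · simpa using hk
    · exact (Polynomial.natDegree_lt_iff_degree_lt h).2 hf
  have hgnd : g.natDegree < k := by
    rcases eq_or_ne g 0 with rfl | h
    · simpa using hk
    · exact (Polynomial.natDegree_lt_iff_degree_lt h).2 hg
  have hext : f.coeff 0 = g.coeff 0 →
      (∀ i, 1 ≤ i → i < k → f.coeff i = g.coeff i) → f = g := by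
    intro h0 hmid
    apply Polynomial.ext
    intro i
    rcases Nat.lt_or_ge i k with hik | hik
    · rcases Nat.eq_zero_or_pos i with rfl | hipos
      · exact h0
      · exact hmid i hipos hik
    · rw [hfc i hik, hgc i hik]
  obtain ⟨m, rfl⟩ : ∃ m, k = m + 1 := ⟨k - 1, by omega⟩
  refine ⟨f, g, hf, hg, hfg, I, J, hI, hJ, heval, _, rfl, ?_, ?_, ?_⟩
  · -- w ≠ 0
    intro h0
    apply hfg
    apply hext
    · have := congrFun h0 ⟨0, by omega⟩
      rw [buildVec_apply] at this
      simp only [dif_pos (by omega : 0 < m + 1)] at this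
      simp only [Pi.zero_apply] at this
      simpa [sub_eq_zero] using this
    · intro i h1 h2
      have hA := congrFun h0 ⟨i, by omega⟩
      rw [buildVec_apply] at hA
      simp only [dif_pos h2, Pi.zero_apply] at hA
      have hB := congrFun h0 ⟨(m + 1) + i - 1, by omega⟩
      rw [buildVec_apply] at hB
      rw [dif_neg (by omega : ¬ (m + 1) + i - 1 < m + 1)] at hB
      simp only [Pi.zero_apply, neg_eq_zero] at hB
      have hidx : (m + 1) + i - 1 - (m + 1) + 1 = i := by omega
      simp only [hidx] at hB
      simp only [if_neg (by omega : ¬ i = 0)] at hA hB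
      rw [hA, hB]
  · -- in the kernel
    funext s
    have hseq := heval s
    set a := α (I s) with ha
    set b := α (J s) with hb
    show ∑ c : Fin (2 * (m + 1) - 1), Vmat (m + 1) n α I J s c *
      buildVec (m + 1) (fun i => if (i : ℕ) = 0 then f.coeff 0 - g.coeff 0 else f.coeff i)
        (fun i => if (i : ℕ) = 0 then 0 else g.coeff i) c = 0
    have hterm : ∀ c : Fin (2 * (m + 1) - 1),
        Vmat (m + 1) n α I J s c *
          buildVec (m + 1) (fun i => if (i : ℕ) = 0 then f.coeff 0 - g.coeff 0 else f.coeff i)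
            (fun i => if (i : ℕ) = 0 then 0 else g.coeff i) c
        = (fun j : ℕ => if j < m + 1 then
              (if j = 0 then 1 else a ^ j) *
                (if j = 0 then f.coeff 0 - g.coeff 0 else f.coeff j)
            else b ^ (j - (m + 1) + 1) * (-(g.coeff (j - (m + 1) + 1)))) (c : ℕ) := by
      intro c
      by_cases h1 : (c : ℕ) = 0
      · simp [Vmat, buildVec, h1]
      · by_cases h2 : (c : ℕ) < m + 1
        · have h2' : (c : ℕ) ≤ m := by omega
          simp [Vmat, buildVec, h1, h2, h2', ha]
        · have h3 : ¬ ((c : ℕ) - (m + 1) + 1 = 0) := by omega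
          have h2' : ¬ (c : ℕ) ≤ m := by omega
          simp [Vmat, buildVec, h1, h2, h3, h2', hb]
    rw [Finset.sum_congr rfl (fun c _ => hterm c),
      Fin.sum_univ_eq_sum_range (fun j : ℕ => if j < m + 1 then
              (if j = 0 then 1 else a ^ j) *
                (if j = 0 then f.coeff 0 - g.coeff 0 else f.coeff j)
            else b ^ (j - (m + 1) + 1) * (-(g.coeff (j - (m + 1) + 1)))) (2 * (m + 1) - 1)]
    beta_reduce
    rw [Finset.range_eq_Ico,
      ← Finset.sum_Ico_consecutive _ (Nat.zero_le (m + 1)) (by omega : m + 1 ≤ 2 * (m + 1) - 1)]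
    have hS1 : (∑ j ∈ Finset.Ico 0 (m + 1), if j < m + 1 then
              (if j = 0 then 1 else a ^ j) *
                (if j = 0 then f.coeff 0 - g.coeff 0 else f.coeff j)
            else b ^ (j - (m + 1) + 1) * (-(g.coeff (j - (m + 1) + 1))))
        = (∑ j ∈ Finset.range m, f.coeff (j + 1) * a ^ (j + 1)) + (f.coeff 0 - g.coeff 0) := by
      rw [← Finset.range_eq_Ico]
      rw [Finset.sum_congr rfl (fun j hj => by
        rw [if_pos (Finset.mem_range.mp hj)])]
      rw [Finset.sum_range_succ']
      simp [mul_comm]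
    have hS2 : (∑ j ∈ Finset.Ico (m + 1) (2 * (m + 1) - 1), if j < m + 1 then
              (if j = 0 then 1 else a ^ j) *
                (if j = 0 then f.coeff 0 - g.coeff 0 else f.coeff j)
            else b ^ (j - (m + 1) + 1) * (-(g.coeff (j - (m + 1) + 1))))
        = -∑ j ∈ Finset.range m, g.coeff (j + 1) * b ^ (j + 1) := by
      rw [Finset.sum_congr rfl (fun j hj => by
        rw [if_neg (by have := (Finset.mem_Ico.mp hj).1; omega)])]
      rw [Finset.sum_Ico_eq_sum_range]
      have hrange : 2 * (m + 1) - 1 - (m + 1) = m := by omega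
      rw [hrange, ← Finset.sum_neg_distrib]
      refine Finset.sum_congr rfl fun j _ => ?_
      have hidx : m + 1 + j - (m + 1) + 1 = j + 1 := by omega
      rw [hidx]
      ring
    rw [hS1, hS2]
    have hfe : f.eval a = (∑ j ∈ Finset.range m, f.coeff (j + 1) * a ^ (j + 1)) + f.coeff 0 := by
      rw [Polynomial.eval_eq_sum_range' hfnd, Finset.sum_range_succ']
      simp
    have hge : g.eval b = (∑ j ∈ Finset.range m, g.coeff (j + 1) * b ^ (j + 1)) + g.coeff 0 := by
      rw [Polynomial.eval_eq_sum_range' hgnd, Finset.sum_range_succ']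
      simp
    rw [hfe, hge] at hseq
    linear_combination hseq
  · -- not of the special form
    rintro ⟨h, h0, hw⟩
    apply hfg
    apply hext
    · have := congrFun hw ⟨0, by omega⟩
      have h0' : h 0 = 0 := by rw [show (0 : Fin (m + 1)) = ⟨0, hk⟩ from rfl]; exact h0
      simp [buildVec, h0'] at this
      linear_combination this
    · intro i h1 h2
      have hA := congrFun hw ⟨i, by omega⟩
      rw [buildVec_apply, buildVec_apply] at hA
      simp only [dif_pos h2, if_neg (by omega : ¬ i = 0)] at hA
      have hB := congrFun hw ⟨(m + 1) + i - 1, by omega⟩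
      rw [buildVec_apply, buildVec_apply] at hB
      rw [dif_neg (by omega : ¬ (m + 1) + i - 1 < m + 1),
          dif_neg (by omega : ¬ (m + 1) + i - 1 < m + 1)] at hB
      have hidx : (m + 1) + i - 1 - (m + 1) + 1 = i := by omega
      simp only [hidx, neg_inj, if_neg (by omega : ¬ i = 0)] at hB
      rw [hA, hB]
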